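/- Let V, W, Z₁, Z₂ be Banach spaces satisfying V ⊕ Z₁ ≅ V ⊕ Z₂ and W ⊕ Z₁ ≅ W ⊕ Z₂, with Z₁ and Z₂ finite-dimensional and V, W essentially incomparable. Suppose there exists an invertible block operator T = [[I_V − B₁B₂, A₁₂],[A₂₁, A₂₂]] : V ⊕ Z₁ → V ⊕ Z₂ with B₁ ∈ B(W,V), B₂ ∈ B(V,W). Then dim Z₁ = dim Z₂. -/

import Mathlib

set_option maxHeartbeats 1600000


open Module

/-- A bounded operator between (semi)normed spaces is *Fredholm of index `k`* if it has closed
range, finite-dimensional kernel and finite-dimensional cokernel, with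
`dim ker - dim coker = k`. -/
def IsFredholmOfIndex {V W : Type*} [SeminormedAddCommGroup V] [NormedSpace ℂ V]
    [SeminormedAddCommGroup W] [NormedSpace ℂ W] (T : V →L[ℂ] W) (k : ℤ) : Prop :=
  IsClosed (LinearMap.range (T : V →ₗ[ℂ] W) : Set W) ∧ FiniteDimensional ℂ (LinearMap.ker (T : V →ₗ[ℂ] W)) ∧
    FiniteDimensional ℂ (W ⧸ LinearMap.range (T : V →ₗ[ℂ] W)) ∧
    (finrank ℂ (LinearMap.ker (T : V →ₗ[ℂ] W)) : ℤ) - finrank ℂ (W ⧸ LinearMap.range (T : V →ₗ[ℂ] W)) = k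

/-- A bounded operator between (semi)normed spaces is *Fredholm* if it has closed range and
finite-dimensional kernel and cokernel. -/
def IsFredholm {V W : Type*} [SeminormedAddCommGroup V] [NormedSpace ℂ V]
    [SeminormedAddCommGroup W] [NormedSpace ℂ W] (T : V →L[ℂ] W) : Prop :=
  IsClosed (LinearMap.range (T : V →ₗ[ℂ] W) : Set W) ∧ FiniteDimensional ℂ (LinearMap.ker (T : V →ₗ[ℂ] W)) ∧
    FiniteDimensional ℂ (W ⧸ LinearMap.range (T : V →ₗ[ℂ] W))

/-- `T ∈ B(G,H)` is *inessential* if `I_G - S T` is Fredholm for every `S ∈ B(H,G)`. -/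
def Inessential {G H : Type*} [SeminormedAddCommGroup G] [NormedSpace ℂ G]
    [SeminormedAddCommGroup H] [NormedSpace ℂ H] (T : G →L[ℂ] H) : Prop :=
  ∀ S : H →L[ℂ] G, IsFredholm (ContinuousLinearMap.id ℂ G - S.comp T)

section FredholmAuxSection

open Module Function LinearMap

namespace FredholmAux

variable {K : Type*} [Field K]

section Conj
variable {X' X Y Y' : Type*}
  [AddCommGroup X'] [Module K X'] [AddCommGroup X] [Module K X]
  [AddCommGroup Y] [Module K Y] [AddCommGroup Y'] [Module K Y']

noncomputable def kerConjEquiv (f : X →ₗ[K] Y) (e₁ : X' ≃ₗ[K] X) (e₂ : Y ≃ₗ[K] Y') :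
    (ker ((e₂ : Y →ₗ[K] Y') ∘ₗ f ∘ₗ (e₁ : X' →ₗ[K] X))) ≃ₗ[K] ker f := by
  have hk : ker ((e₂ : Y →ₗ[K] Y') ∘ₗ f ∘ₗ (e₁ : X' →ₗ[K] X))
      = (ker f).comap (e₁ : X' →ₗ[K] X) := by
    rw [ker_comp, LinearEquiv.ker, Submodule.comap_bot, ker_comp]
  exact (LinearEquiv.ofEq _ _ hk).trans (LinearEquiv.ofSubmodule' e₁ (ker f))

noncomputable def cokerConjEquiv (f : X →ₗ[K] Y) (e₁ : X' ≃ₗ[K] X) (e₂ : Y ≃ₗ[K] Y') :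
    (Y' ⧸ range ((e₂ : Y →ₗ[K] Y') ∘ₗ f ∘ₗ (e₁ : X' →ₗ[K] X))) ≃ₗ[K] (Y ⧸ range f) := by
  have hr : range ((e₂ : Y →ₗ[K] Y') ∘ₗ f ∘ₗ (e₁ : X' →ₗ[K] X))
      = (range f).map (e₂ : Y →ₗ[K] Y') := by
    rw [range_comp, range_comp, LinearEquiv.range, Submodule.map_top]
  exact (Submodule.quotEquivOfEq _ _ hr).trans
    (Submodule.Quotient.equiv (range f) _ e₂ rfl).symm

end Conj

section Prod
variable {X P Y Q : Type*}
  [AddCommGroup X] [Module K X] [AddCommGroup P] [Module K P]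
  [AddCommGroup Y] [Module K Y] [AddCommGroup Q] [Module K Q]

/-- `⊥.prod q ≃ q`. -/
noncomputable def botProdEquiv (q : Submodule K P) :
    ((⊥ : Submodule K X).prod q) ≃ₗ[K] q where
  toFun x := ⟨x.val.2, x.2.2⟩
  map_add' x y := rfl
  map_smul' c x := rfl
  invFun p := ⟨((0 : X), p.val), ⟨Submodule.zero_mem _, p.2⟩⟩
  left_inv x := by
    apply Subtype.ext
    have h1 : x.val.1 ∈ (⊥ : Submodule K X) := x.2.1
    rw [Submodule.mem_bot] at h1
    exact Prod.ext h1.symm rfl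
  right_inv p := rfl

/-- Quotient of `Y × Q` by `⊤.prod q`. -/
noncomputable def topProdQuotEquiv (q : Submodule K Q) :
    ((Y × Q) ⧸ ((⊤ : Submodule K Y).prod q)) ≃ₗ[K] (Q ⧸ q) := by
  have hsurj : Surjective (q.mkQ ∘ₗ (LinearMap.snd K Y Q)) :=
    (Submodule.mkQ_surjective q).comp (fun x => ⟨(0, x), rfl⟩)
  have hker : ker (q.mkQ ∘ₗ (LinearMap.snd K Y Q)) = (⊤ : Submodule K Y).prod q := by
    ext ⟨y, z⟩
    simp [LinearMap.mem_ker, Submodule.mem_prod]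
  exact (Submodule.quotEquivOfEq _ _ hker.symm).trans
    ((q.mkQ ∘ₗ (LinearMap.snd K Y Q)).quotKerEquivOfSurjective hsurj)

theorem range_prodMap' (a : X →ₗ[K] Y) (s : P →ₗ[K] Q) :
    range (a.prodMap s) = (range a).prod (range s) := by
  ext ⟨y, z⟩
  constructor
  · rintro ⟨⟨x, p⟩, h⟩
    obtain ⟨h1, h2⟩ := Prod.mk.injEq .. ▸ h
    exact ⟨⟨x, h1⟩, ⟨p, h2⟩⟩
  · rintro ⟨⟨x, h1⟩, ⟨p, h2⟩⟩
    exact ⟨(x, p), by simp [LinearMap.prodMap_apply, h1, h2]⟩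

noncomputable def kerProdMapEquiv (a : X →ₗ[K] Y) (s : P →ₗ[K] Q) (ha : Bijective a) :
    ker (a.prodMap s) ≃ₗ[K] ker s := by
  have h : ker (a.prodMap s) = (⊥ : Submodule K X).prod (ker s) := by
    rw [ker_prodMap, ker_eq_bot.mpr ha.1]
  exact (LinearEquiv.ofEq _ _ h).trans (botProdEquiv (ker s))

noncomputable def cokerProdMapEquiv (a : X →ₗ[K] Y) (s : P →ₗ[K] Q) (ha : Bijective a) :
    ((Y × Q) ⧸ range (a.prodMap s)) ≃ₗ[K] (Q ⧸ range s) := by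
  have h : range (a.prodMap s) = (⊤ : Submodule K Y).prod (range s) := by
    rw [range_prodMap', range_eq_top.mpr ha.2]
  exact (Submodule.quotEquivOfEq _ _ h).trans (topProdQuotEquiv (range s))

end Prod

section Schur
variable {X P Y Q : Type*}
  [AddCommGroup X] [Module K X] [AddCommGroup P] [Module K P]
  [AddCommGroup Y] [Module K Y] [AddCommGroup Q] [Module K Q]

theorem schur (M : (X × P) →ₗ[K] (Y × Q))
    (ha : Bijective ((LinearMap.fst K Y Q) ∘ₗ M ∘ₗ (LinearMap.inl K X P))) :
    ∃ s : P →ₗ[K] Q, Nonempty (ker M ≃ₗ[K] ker s) ∧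
      Nonempty (((Y × Q) ⧸ range M) ≃ₗ[K] (Q ⧸ range s)) := by
  set a : X →ₗ[K] Y := (LinearMap.fst K Y Q) ∘ₗ M ∘ₗ (LinearMap.inl K X P) with ha_def
  set b : P →ₗ[K] Y := (LinearMap.fst K Y Q) ∘ₗ M ∘ₗ (LinearMap.inr K X P) with hb_def
  set c : X →ₗ[K] Q := (LinearMap.snd K Y Q) ∘ₗ M ∘ₗ (LinearMap.inl K X P) with hc_def
  set d : P →ₗ[K] Q := (LinearMap.snd K Y Q) ∘ₗ M ∘ₗ (LinearMap.inr K X P) with hd_def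
  set ea : X ≃ₗ[K] Y := LinearEquiv.ofBijective a ha with hea
  set ai : Y →ₗ[K] X := (ea.symm : Y →ₗ[K] X) with hai
  have hmul : ∀ y : Y, a (ai y) = y := fun y => ea.apply_symm_apply y
  have hmul' : ∀ x : X, ai (a x) = x := fun x => ea.symm_apply_apply x
  set s : P →ₗ[K] Q := d - c ∘ₗ ai ∘ₗ b with hs
  set R₁ : (X × P) ≃ₗ[K] (X × P) := LinearEquiv.ofLinear
    (LinearMap.prod ((LinearMap.fst K X P) + ai ∘ₗ b ∘ₗ (LinearMap.snd K X P))
      (LinearMap.snd K X P))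
    (LinearMap.prod ((LinearMap.fst K X P) - ai ∘ₗ b ∘ₗ (LinearMap.snd K X P))
      (LinearMap.snd K X P))
    (by apply LinearMap.ext; rintro ⟨x, p⟩; simp)
    (by apply LinearMap.ext; rintro ⟨x, p⟩; simp) with hR₁
  set L₂ : (Y × Q) ≃ₗ[K] (Y × Q) := LinearEquiv.ofLinear
    (LinearMap.prod (LinearMap.fst K Y Q)
      ((LinearMap.snd K Y Q) + c ∘ₗ ai ∘ₗ (LinearMap.fst K Y Q)))
    (LinearMap.prod (LinearMap.fst K Y Q)
      ((LinearMap.snd K Y Q) - c ∘ₗ ai ∘ₗ (LinearMap.fst K Y Q)))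
    (by apply LinearMap.ext; rintro ⟨y, q⟩; simp)
    (by apply LinearMap.ext; rintro ⟨y, q⟩; simp) with hL₂
  have hfac : (L₂ : (Y × Q) →ₗ[K] (Y × Q)) ∘ₗ (a.prodMap s) ∘ₗ (R₁ : (X × P) →ₗ[K] (X × P))
      = M := by
    apply LinearMap.ext
    rintro ⟨x, p⟩
    have hM : M (x, p) = M (x, 0) + M (0, p) := by
      rw [← map_add]; norm_num
    have h1 : (M (x, p)).1 = a x + b p := by
      rw [hM]; rfl
    have h2 : (M (x, p)).2 = c x + d p := by
      rw [hM]; rfl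
    have hco : (L₂ : (Y × Q) →ₗ[K] (Y × Q))
        (((a.prodMap s) ∘ₗ (R₁ : (X × P) →ₗ[K] (X × P))) (x, p))
        = (a x + b p, c x + d p) := by
      show (L₂ : (Y × Q) →ₗ[K] (Y × Q)) ((a (x + ai (b p)), s p)) = _
      have hfst : a (x + ai (b p)) = a x + b p := by rw [map_add, hmul]
      show (a (x + ai (b p)), s p + c (ai (a (x + ai (b p))))) = _
      rw [hfst]
      refine Prod.ext rfl ?_
      have h3 : ai (a x + b p) = x + ai (b p) := by
        rw [← hfst, hmul']
      rw [h3, map_add c, hs]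
      simp only [LinearMap.sub_apply, LinearMap.comp_apply]
      abel
    simp only [LinearMap.comp_apply] at hco ⊢
    rw [hco]
    exact Prod.ext h1.symm h2.symm
  refine ⟨s, ?_, ?_⟩
  · have hk : ker M = ker ((L₂ : (Y × Q) →ₗ[K] (Y × Q)) ∘ₗ (a.prodMap s)
        ∘ₗ (R₁ : (X × P) →ₗ[K] (X × P))) := by rw [hfac]
    exact ⟨(LinearEquiv.ofEq _ _ hk).trans
      ((kerConjEquiv (a.prodMap s) R₁ L₂).trans (kerProdMapEquiv a s ha))⟩
  · have hr : range M = range ((L₂ : (Y × Q) →ₗ[K] (Y × Q)) ∘ₗ (a.prodMap s)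
        ∘ₗ (R₁ : (X × P) →ₗ[K] (X × P))) := by rw [hfac]
    exact ⟨(Submodule.quotEquivOfEq _ _ hr).trans
      ((cokerConjEquiv (a.prodMap s) R₁ L₂).trans (cokerProdMapEquiv a s ha))⟩

theorem schur_finrank (M : (X × P) →ₗ[K] (Y × Q))
    [FiniteDimensional K P] [FiniteDimensional K Q]
    (ha : Bijective ((LinearMap.fst K Y Q) ∘ₗ M ∘ₗ (LinearMap.inl K X P))) :
    FiniteDimensional K (ker M) ∧ FiniteDimensional K ((Y × Q) ⧸ range M) ∧
      (finrank K (ker M) : ℤ) - finrank K ((Y × Q) ⧸ range M)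
        = (finrank K P : ℤ) - finrank K Q := by
  obtain ⟨s, ⟨ek⟩, ⟨ec⟩⟩ := schur M ha
  haveI : FiniteDimensional K (ker M) := ek.symm.finiteDimensional
  haveI : FiniteDimensional K ((Y × Q) ⧸ range M) := ec.symm.finiteDimensional
  refine ⟨‹_›, ‹_›, ?_⟩
  rw [ek.finrank_eq, ec.finrank_eq]
  have h1 := LinearMap.finrank_range_add_finrank_ker s
  have h2 := Submodule.finrank_quotient_add_finrank (LinearMap.range s)
  omega

end Schur

section Key

open ContinuousLinearMap

variable {V Z₁ Z₂ : Type*}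
  [NormedAddCommGroup V] [NormedSpace ℂ V] [CompleteSpace V]
  [NormedAddCommGroup Z₁] [NormedSpace ℂ Z₁] [FiniteDimensional ℂ Z₁]
  [NormedAddCommGroup Z₂] [NormedSpace ℂ Z₂] [FiniteDimensional ℂ Z₂]

theorem key (A₁₂ : Z₁ →L[ℂ] V) (A₂₁ : V →L[ℂ] Z₂) (A₂₂ : Z₁ →L[ℂ] Z₂)
    (F : V →L[ℂ] V) (hcl : IsClosed (LinearMap.range (F : V →ₗ[ℂ] V) : Set V))
    (hker : FiniteDimensional ℂ (LinearMap.ker (F : V →ₗ[ℂ] V)))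
    (hcoker : FiniteDimensional ℂ (V ⧸ LinearMap.range (F : V →ₗ[ℂ] V))) :
    ∃ ε > 0, ∀ G : V →L[ℂ] V, ‖G - F‖ < ε →
      (finrank ℂ (LinearMap.ker ((G.coprod A₁₂).prod (A₂₁.coprod A₂₂) : (V × Z₁) →ₗ[ℂ] (V × Z₂))) : ℤ)
          - finrank ℂ ((V × Z₂) ⧸ LinearMap.range ((G.coprod A₁₂).prod (A₂₁.coprod A₂₂) : (V × Z₁) →ₗ[ℂ] (V × Z₂)))
        = (finrank ℂ (LinearMap.ker (F : V →ₗ[ℂ] V)) : ℤ) + finrank ℂ Z₁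
          - finrank ℂ (V ⧸ LinearMap.range (F : V →ₗ[ℂ] V)) - finrank ℂ Z₂ := by
  haveI := hker; haveI := hcoker
  set N := LinearMap.ker (F : V →ₗ[ℂ] V) with hN
  set R := LinearMap.range (F : V →ₗ[ℂ] V) with hR
  obtain ⟨V₀, hV₀c, hNV₀⟩ :=
    (Submodule.ClosedComplemented.of_finiteDimensional N).exists_isClosed_isCompl
  obtain ⟨C, hCc, hRC⟩ :=
    (Submodule.ClosedComplemented.of_quotient_finiteDimensional hcl).exists_isClosed_isCompl
  haveI : CompleteSpace V₀ := hV₀c.completeSpace_coe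
  haveI : CompleteSpace R := hcl.completeSpace_coe
  haveI : FiniteDimensional ℂ C := (Submodule.quotientEquivOfIsCompl R C hRC).finiteDimensional
  have hCrank : finrank ℂ C = finrank ℂ (V ⧸ R) :=
    (Submodule.quotientEquivOfIsCompl R C hRC).finrank_eq.symm
  set PR : V →L[ℂ] R := R.linearProjOfClosedCompl C hRC hcl hCc with hPRdef
  have hPR : ∀ x : R, PR (x : V) = x := by
    intro x
    show (R.linearProjOfClosedCompl C hRC hcl hCc) (x : V) = x
    rw [Submodule.coe_continuous_linearProjOfClosedCompl']
    exact Submodule.linearProjOfIsCompl_apply_left hRC x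
  set aL : (V →L[ℂ] V) → (V₀ →L[ℂ] R) := fun G => PR.comp (G.comp V₀.subtypeL) with haL
  have haLapp : ∀ (G : V →L[ℂ] V) (x : V₀), aL G x = PR (G (x : V)) := fun G x => rfl
  have hkerF : LinearMap.ker (aL F : V₀ →ₗ[ℂ] R) = ⊥ := by
    rw [LinearMap.ker_eq_bot']
    intro x hx
    have h1 : F (x : V) ∈ R := LinearMap.mem_range_self (F : V →ₗ[ℂ] V) (x : V)
    have h2 : aL F x = ⟨F (x : V), h1⟩ := by rw [haLapp]; exact hPR ⟨_, h1⟩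
    rw [ContinuousLinearMap.coe_coe, h2] at hx
    have h3 : F (x : V) = 0 := congrArg Subtype.val hx
    have h4 : (x : V) ∈ N := LinearMap.mem_ker.mpr h3
    have h5 : (x : V) = 0 := Submodule.disjoint_def.mp hNV₀.disjoint _ h4 x.2
    exact Subtype.ext h5
  have hranF : LinearMap.range (aL F : V₀ →ₗ[ℂ] R) = ⊤ := by
    rw [LinearMap.range_eq_top]
    rintro ⟨y, hy⟩
    obtain ⟨x, hx⟩ := hy
    have hxmem : x ∈ N ⊔ V₀ := by rw [hNV₀.sup_eq_top]; trivial
    obtain ⟨n, hn, v, hv, rfl⟩ := Submodule.mem_sup.mp hxmem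
    have hFv : F v = y := by
      have hn0 : (F : V →ₗ[ℂ] V) n = 0 := LinearMap.mem_ker.mp hn
      rw [map_add, hn0, zero_add] at hx
      exact hx
    have h1 : F v ∈ R := LinearMap.mem_range_self (F : V →ₗ[ℂ] V) v
    refine ⟨⟨v, hv⟩, ?_⟩
    have h2 : aL F ⟨v, hv⟩ = ⟨F v, h1⟩ := by rw [haLapp]; exact hPR ⟨_, h1⟩
    rw [ContinuousLinearMap.coe_coe, h2]
    exact Subtype.ext hFv
  set e₀ : V₀ ≃L[ℂ] R := ContinuousLinearEquiv.ofBijective (aL F) hkerF hranF with he₀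
  have he₀coe : ⇑e₀ = ⇑(aL F) := ContinuousLinearEquiv.coeFn_ofBijective _ _ _
  set nrm := ‖(e₀.symm : R →L[ℂ] V₀)‖ with hnrm
  have hnrm0 : 0 ≤ nrm := by rw [hnrm]; exact opNorm_nonneg ((e₀.symm : R →L[ℂ] V₀))
  refine ⟨1 / ((nrm + 1) * (‖PR‖ + 1)), by positivity, ?_⟩
  intro G hG
  have hsub : aL F - aL G = PR.comp ((F - G).comp V₀.subtypeL) := by
    ext x
    simp [haLapp, ContinuousLinearMap.sub_apply]
  set t : V₀ →L[ℂ] V₀ := (e₀.symm : R →L[ℂ] V₀).comp (aL F - aL G) with ht_def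
  have hnormFG : ‖aL F - aL G‖ ≤ ‖PR‖ * ‖F - G‖ := by
    rw [hsub]
    calc ‖PR.comp ((F - G).comp V₀.subtypeL)‖
        ≤ ‖PR‖ * ‖(F - G).comp V₀.subtypeL‖ := opNorm_comp_le _ _
      _ ≤ ‖PR‖ * (‖F - G‖ * ‖V₀.subtypeL‖) :=
          mul_le_mul_of_nonneg_left (opNorm_comp_le _ _) (opNorm_nonneg PR)
      _ ≤ ‖PR‖ * ‖F - G‖ := by
          have h1 : ‖V₀.subtypeL‖ ≤ 1 := Submodule.norm_subtypeL_le V₀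
          have h2 : ‖PR‖ * (‖F - G‖ * ‖V₀.subtypeL‖) ≤ ‖PR‖ * (‖F - G‖ * 1) :=
            mul_le_mul_of_nonneg_left
              (mul_le_mul_of_nonneg_left h1 (opNorm_nonneg (F - G))) (opNorm_nonneg PR)
          simpa using h2
  have hFG : ‖F - G‖ < 1 / ((nrm + 1) * (‖PR‖ + 1)) := by rw [norm_sub_rev]; exact hG
  have ht : ‖t‖ < 1 := by
    have h2 : ‖t‖ ≤ nrm * ‖aL F - aL G‖ := opNorm_comp_le _ _
    have h3 : nrm * ‖aL F - aL G‖ ≤ nrm * (‖PR‖ * ‖F - G‖) :=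
      mul_le_mul_of_nonneg_left hnormFG hnrm0
    have h4 : (0:ℝ) ≤ ‖PR‖ := opNorm_nonneg PR
    have h5 : (0:ℝ) ≤ ‖F - G‖ := opNorm_nonneg (F - G)
    have h6 : ((nrm + 1) * (‖PR‖ + 1)) * ‖F - G‖ < 1 := by
      rw [lt_div_iff₀ (by positivity)] at hFG
      linarith [hFG]
    nlinarith
  set u := Units.oneSub t ht with hu
  have hu_val : (↑u : V₀ →L[ℂ] V₀) = 1 - t := rfl
  have hbij1 : Function.Bijective ⇑((1 : V₀ →L[ℂ] V₀) - t) := by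
    constructor
    · intro x y hxy
      have h7 : (↑u⁻¹ * ↑u : V₀ →L[ℂ] V₀) x = (↑u⁻¹ * ↑u : V₀ →L[ℂ] V₀) y := by
        rw [ContinuousLinearMap.mul_apply, ContinuousLinearMap.mul_apply, hu_val, hxy]
      rwa [u.inv_mul, ContinuousLinearMap.one_apply, ContinuousLinearMap.one_apply] at h7
    · intro y
      refine ⟨(↑u⁻¹ : V₀ →L[ℂ] V₀) y, ?_⟩
      have h8 := congrArg (fun f : V₀ →L[ℂ] V₀ => f y) u.mul_inv
      simpa [ContinuousLinearMap.mul_apply, hu_val] using h8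
  have hcoe : ⇑(aL G) = ⇑e₀ ∘ ⇑((1 : V₀ →L[ℂ] V₀) - t) := by
    funext x
    rw [Function.comp_apply]
    have h1 : ((1 : V₀ →L[ℂ] V₀) - t) x = x - e₀.symm ((aL F - aL G) x) := by
      rw [ContinuousLinearMap.sub_apply, ContinuousLinearMap.one_apply, ht_def]
      rfl
    rw [h1, map_sub, e₀.apply_symm_apply]
    rw [show (e₀ x : R) = aL F x from congrFun he₀coe x]
    rw [ContinuousLinearMap.sub_apply]
    abel
  have hbijG : Function.Bijective ⇑(aL G) := by
    rw [hcoe]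
    exact e₀.bijective.comp hbij1
  -- algebraic part
  set MG := (G.coprod A₁₂).prod (A₂₁.coprod A₂₂) with hMG
  set E₁ : (V₀ × (N × Z₁)) ≃ₗ[ℂ] (V × Z₁) :=
    (LinearEquiv.prodAssoc ℂ V₀ N Z₁).symm.trans
      ((Submodule.prodEquivOfIsCompl V₀ N hNV₀.symm).prodCongr (LinearEquiv.refl ℂ Z₁)) with hE₁
  set E₂ : (V × Z₂) ≃ₗ[ℂ] (R × (C × Z₂)) :=
    ((Submodule.prodEquivOfIsCompl R C hRC).symm.prodCongr (LinearEquiv.refl ℂ Z₂)).trans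
      (LinearEquiv.prodAssoc ℂ R C Z₂) with hE₂
  set M' : (V₀ × (N × Z₁)) →ₗ[ℂ] (R × (C × Z₂)) :=
    (E₂ : (V × Z₂) →ₗ[ℂ] (R × (C × Z₂))) ∘ₗ (MG : (V × Z₁) →ₗ[ℂ] (V × Z₂))
      ∘ₗ (E₁ : (V₀ × (N × Z₁)) →ₗ[ℂ] (V × Z₁)) with hM'
  have hcorner : ⇑((LinearMap.fst ℂ R (C × Z₂)) ∘ₗ M' ∘ₗ (LinearMap.inl ℂ V₀ (N × Z₁)))
      = ⇑(aL G) := by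
    funext x
    show (E₂ ((MG : (V × Z₁) →ₗ[ℂ] (V × Z₂)) (E₁ ((x : V₀), (0 : N × Z₁))))).1 = aL G x
    have h1 : E₁ ((x : V₀), (0 : N × Z₁)) = ((x : V), (0 : Z₁)) := by
      have hassoc : (LinearEquiv.prodAssoc ℂ V₀ N Z₁).symm ((x : V₀), (0 : N × Z₁))
          = ((x, 0), 0) := rfl
      rw [hE₁, LinearEquiv.trans_apply, hassoc, LinearEquiv.prodCongr_apply]
      simp [Submodule.coe_prodEquivOfIsCompl']
    rw [h1]
    have h2 : (MG : (V × Z₁) →ₗ[ℂ] (V × Z₂)) ((x : V), (0 : Z₁)) = (G (x : V), A₂₁ (x : V)) := by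
      show MG ((x : V), (0 : Z₁)) = _
      rw [hMG]
      simp
    rw [h2]
    rw [hE₂, LinearEquiv.trans_apply, LinearEquiv.prodCongr_apply]
    show ((Submodule.prodEquivOfIsCompl R C hRC).symm (G (x : V))).1 = aL G x
    rw [haLapp, hPRdef]
    rw [show ⇑(R.linearProjOfClosedCompl C hRC hcl hCc) = ⇑(R.linearProjOfIsCompl C hRC) from
      Submodule.coe_continuous_linearProjOfClosedCompl' hRC hcl hCc]
    rfl
  have hbij' : Function.Bijective
      ⇑((LinearMap.fst ℂ R (C × Z₂)) ∘ₗ M' ∘ₗ (LinearMap.inl ℂ V₀ (N × Z₁))) := by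
    rw [hcorner]; exact hbijG
  obtain ⟨hfin1, hfin2, hval⟩ := schur_finrank M' hbij'
  have ekc := kerConjEquiv (MG : (V × Z₁) →ₗ[ℂ] (V × Z₂)) E₁ E₂
  have ecc := cokerConjEquiv (MG : (V × Z₁) →ₗ[ℂ] (V × Z₂)) E₁ E₂
  have hkeq : finrank ℂ (LinearMap.ker (MG : (V × Z₁) →ₗ[ℂ] (V × Z₂))) = finrank ℂ (LinearMap.ker M') := ekc.finrank_eq.symm
  have hceq : finrank ℂ ((V × Z₂) ⧸ LinearMap.range (MG : (V × Z₁) →ₗ[ℂ] (V × Z₂)))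
      = finrank ℂ ((R × (C × Z₂)) ⧸ LinearMap.range M') := ecc.finrank_eq.symm
  rw [hkeq, hceq, hval]
  have hp1 : finrank ℂ (N × Z₁) = finrank ℂ N + finrank ℂ Z₁ := Module.finrank_prod
  have hp2 : finrank ℂ (C × Z₂) = finrank ℂ C + finrank ℂ Z₂ := Module.finrank_prod
  rw [hp1, hp2, hCrank]
  push_cast
  ring

end Key

end FredholmAux

end FredholmAuxSection

/-- If `V ⊕ Z₁ ≅ V ⊕ Z₂`, `W ⊕ Z₁ ≅ W ⊕ Z₂` with `Z₁, Z₂` finite-dimensional,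
`V` and `W` essentially incomparable, and there is an invertible block operator
`[[I_V - B₁B₂, A₁₂],[A₂₁, A₂₂]] : V ⊕ Z₁ → V ⊕ Z₂` with `B₁ ∈ B(W,V)`, `B₂ ∈ B(V,W)`,
then `dim Z₁ = dim Z₂`. -/
theorem dim_eq_of_block_invertible_essentially_incomparable (V : Type u) [NormedAddCommGroup V]
    [NormedSpace ℂ V] [CompleteSpace V]
    (W : Type u) [NormedAddCommGroup W] [NormedSpace ℂ W] [CompleteSpace W]
    (Z₁ : Type u) [NormedAddCommGroup Z₁] [NormedSpace ℂ Z₁] [FiniteDimensional ℂ Z₁]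
    (Z₂ : Type u) [NormedAddCommGroup Z₂] [NormedSpace ℂ Z₂] [FiniteDimensional ℂ Z₂]
    (hVZ : Nonempty ((V × Z₁) ≃L[ℂ] (V × Z₂)))
    (hWZ : Nonempty ((W × Z₁) ≃L[ℂ] (W × Z₂)))
    (hinc : ∀ T : V →L[ℂ] W, Inessential T)
    (B₁ : W →L[ℂ] V) (B₂ : V →L[ℂ] W) (A₁₂ : Z₁ →L[ℂ] V) (A₂₁ : V →L[ℂ] Z₂)
    (A₂₂ : Z₁ →L[ℂ] Z₂) (T : (V × Z₁) ≃L[ℂ] (V × Z₂))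
    (hT : (T : (V × Z₁) →L[ℂ] (V × Z₂)) =
      (((ContinuousLinearMap.id ℂ V - B₁.comp B₂).coprod A₁₂).prod (A₂₁.coprod A₂₂))) :
    finrank ℂ Z₁ = finrank ℂ Z₂ := by
  classical
  set K := B₁.comp B₂ with hK
  set Gc : ℝ → (V →L[ℂ] V) := fun lam => ContinuousLinearMap.id ℂ V - ((lam : ℂ)) • K with hGc
  set Mc : ℝ → ((V × Z₁) →L[ℂ] (V × Z₂)) :=
    fun lam => ((Gc lam).coprod A₁₂).prod (A₂₁.coprod A₂₂) with hMc
  set g : ℝ → ℤ := fun lam =>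
    (finrank ℂ (LinearMap.ker (Mc lam : (V × Z₁) →ₗ[ℂ] (V × Z₂))) : ℤ)
      - finrank ℂ ((V × Z₂) ⧸ LinearMap.range (Mc lam : (V × Z₁) →ₗ[ℂ] (V × Z₂))) with hg
  have hKnn : (0:ℝ) ≤ ‖K‖ := norm_nonneg K
  have hFred : ∀ lam : ℝ, IsFredholm (Gc lam) := by
    intro lam
    have h := hinc B₂ (((lam : ℂ)) • B₁)
    have heq : ContinuousLinearMap.id ℂ V - (((lam : ℂ)) • B₁).comp B₂ = Gc lam := by
      rw [hGc, ContinuousLinearMap.smul_comp, hK]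
    rwa [heq] at h
  have hloc : IsLocallyConstant g := by
    rw [IsLocallyConstant.iff_exists_open]
    intro lam₀
    obtain ⟨hcl, hker, hcok⟩ := hFred lam₀
    obtain ⟨ε, hε, hkey⟩ := FredholmAux.key A₁₂ A₂₁ A₂₂ (Gc lam₀) hcl hker hcok
    refine ⟨Metric.ball lam₀ (ε / (‖K‖ + 1)), Metric.isOpen_ball,
      Metric.mem_ball_self (by positivity), ?_⟩
    have hdiff : ∀ μ ∈ Metric.ball lam₀ (ε / (‖K‖ + 1)), ‖Gc μ - Gc lam₀‖ < ε := by
      intro μ hμ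
      have h1 : Gc μ - Gc lam₀ = (((lam₀ : ℝ) : ℂ) - ((μ : ℝ) : ℂ)) • K := by
        rw [hGc]
        simp only []
        rw [sub_sub_sub_cancel_left, ← sub_smul]
      have habs : |lam₀ - μ| < ε / (‖K‖ + 1) := by
        rw [Metric.mem_ball, Real.dist_eq] at hμ
        rw [abs_sub_comm]
        exact hμ
      have h2 : |lam₀ - μ| * (‖K‖ + 1) < ε := (lt_div_iff₀ (by positivity)).mp habs
      have h3 : ‖Gc μ - Gc lam₀‖ = ‖((lam₀ : ℂ) - (μ : ℂ))‖ * ‖K‖ := by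
        rw [h1]; exact norm_smul ((lam₀ : ℂ) - (μ : ℂ)) K
      have h4 : ‖((lam₀ : ℂ) - (μ : ℂ))‖ = |lam₀ - μ| := by
        rw [← Complex.ofReal_sub, Complex.norm_real, Real.norm_eq_abs]
      rw [h3, h4]
      nlinarith [abs_nonneg (lam₀ - μ)]
    intro y hy
    have hgy := hkey (Gc y) (hdiff y hy)
    have hg0 := hkey (Gc lam₀) (by simpa using hε)
    show g y = g lam₀
    rw [hg]
    simp only []
    rw [hMc]
    simp only []
    rw [hgy, hg0]
  have hconst : g 0 = g 1 :=
    hloc.apply_eq_of_isPreconnected isPreconnected_univ (Set.mem_univ (0:ℝ)) (Set.mem_univ (1:ℝ))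
  have hg1 : g 1 = 0 := by
    have hM1 : Mc 1 = (T : (V × Z₁) →L[ℂ] (V × Z₂)) := by
      rw [hT, hMc]
      simp only [hGc, hK]
      norm_num
    rw [hg]
    simp only []
    rw [hM1]
    have hk : LinearMap.ker ((T : (V × Z₁) →L[ℂ] (V × Z₂)) : (V × Z₁) →ₗ[ℂ] (V × Z₂)) = ⊥ := by
      rw [LinearMap.ker_eq_bot]
      intro x y hxy
      exact T.injective (by simpa using hxy)
    have hr : LinearMap.range ((T : (V × Z₁) →L[ℂ] (V × Z₂)) : (V × Z₁) →ₗ[ℂ] (V × Z₂)) = ⊤ := by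
      rw [LinearMap.range_eq_top]
      intro y
      exact ⟨T.symm y, by simp⟩
    rw [hk, hr, finrank_bot]
    haveI : Subsingleton ((V × Z₂) ⧸ (⊤ : Submodule ℂ (V × Z₂))) :=
      Submodule.Quotient.subsingleton_iff.mpr rfl
    rw [finrank_zero_of_subsingleton]
    simp
  have hg0 : g 0 = (finrank ℂ Z₁ : ℤ) - finrank ℂ Z₂ := by
    obtain ⟨hcl, hker, hcok⟩ := hFred 0
    obtain ⟨ε, hε, hkey⟩ := FredholmAux.key A₁₂ A₂₁ A₂₂ (Gc 0) hcl hker hcok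
    have h00 := hkey (Gc 0) (by simpa using hε)
    have hG0 : Gc 0 = ContinuousLinearMap.id ℂ V := by
      rw [hGc]
      norm_num
    have hk0 : finrank ℂ (LinearMap.ker (Gc 0 : V →ₗ[ℂ] V)) = 0 := by
      have : LinearMap.ker (Gc 0 : V →ₗ[ℂ] V) = ⊥ := by
        rw [LinearMap.ker_eq_bot, hG0]
        intro x y hxy
        simpa using hxy
      rw [this, finrank_bot]
    have hr0 : finrank ℂ (V ⧸ LinearMap.range (Gc 0 : V →ₗ[ℂ] V)) = 0 := by
      have hrt : LinearMap.range (Gc 0 : V →ₗ[ℂ] V) = ⊤ := by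
        rw [LinearMap.range_eq_top, hG0]
        intro y
        exact ⟨y, by simp⟩
      haveI : Subsingleton (V ⧸ LinearMap.range (Gc 0 : V →ₗ[ℂ] V)) :=
        Submodule.Quotient.subsingleton_iff.mpr hrt
      exact finrank_zero_of_subsingleton
    rw [hg]
    simp only []
    rw [hMc]
    simp only []
    rw [h00, hk0, hr0]
    push_cast
    ring
  have : (finrank ℂ Z₁ : ℤ) - finrank ℂ Z₂ = 0 := by rw [← hg0, hconst, hg1]
  omega
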